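/- arXiv:1806.09611 — 4 statements merged into one kernel-verified Lean document; each statement's English description precedes it below -/
import Mathlib

section
/- Let X be a real random variable with distribution F, 0 < ε < 1/2, q(ε) = 1/(2(1-ε)), and suppose A = F^{-1}(1 - q(ε)) and B = F^{-1}(q(ε)) exist uniquely. Then for any distribution G on ℝ, the median of the contaminated distribution F(ε, G) = (1-ε)F + εG satisfies A ≤ Med(F(ε, G)) ≤ B. -/
open MeasureTheory ProbabilityTheory
open scoped ENNReal

/-- ε-contamination `F(ε, G) = (1-ε)F + εG`. -/
noncomputable def mix {α : Type*} [MeasurableSpace α] (ε : ℝ) (F G : Measure α) : Measure α :=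
  ENNReal.ofReal (1 - ε) • F + ENNReal.ofReal ε • G

/-- The `p`-th quantile of a measure on `ℝ`. -/
noncomputable def quant (μ : Measure ℝ) (p : ℝ) : ℝ := sInf {x : ℝ | p ≤ cdf μ x}

/-- The median of a measure on `ℝ`. -/
noncomputable def med (μ : Measure ℝ) : ℝ := quant μ (1 / 2)

/-- Lemma 3.1 (L-i): `A ≤ Med(F(ε,G)) ≤ B`. -/
theorem stmt4 (F G : Measure ℝ) [IsProbabilityMeasure F] [IsProbabilityMeasure G]
    (ε : ℝ) (hε1 : 0 < ε) (hε2 : ε < 1 / 2)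
    (A B : ℝ)
    (hA : cdf F A = 1 - 1 / (2 * (1 - ε)))
    (hAu : ∀ t : ℝ, cdf F t = 1 - 1 / (2 * (1 - ε)) → t = A)
    (hB : cdf F B = 1 / (2 * (1 - ε)))
    (hBu : ∀ t : ℝ, cdf F t = 1 / (2 * (1 - ε)) → t = B) :
    A ≤ med (mix ε F G) ∧ med (mix ε F G) ≤ B := by
  have hε0 : (0:ℝ) < 1 - ε := by linarith
  have hprob : IsProbabilityMeasure (mix ε F G) := by
    constructor
    simp [mix, ← ENNReal.ofReal_add hε0.le hε1.le]
  have hcdf : ∀ x, cdf (mix ε F G) x = (1 - ε) * cdf F x + ε * cdf G x := by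
    intro x
    rw [cdf_eq_real, measureReal_def]
    simp only [mix, Measure.add_apply, Measure.smul_apply, smul_eq_mul]
    rw [ENNReal.toReal_add (by finiteness) (by finiteness), ENNReal.toReal_mul,
      ENNReal.toReal_mul, ENNReal.toReal_ofReal hε0.le, ENNReal.toReal_ofReal hε1.le,
      ← measureReal_def, ← measureReal_def, ← cdf_eq_real, ← cdf_eq_real]
  have hBmem : (1:ℝ)/2 ≤ cdf (mix ε F G) B := by
    rw [hcdf]
    have h1 : (1 - ε) * cdf F B = 1/2 := by
      rw [hB]; field_simp
    nlinarith [cdf_nonneg G B]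
  have hlow : ∀ x ∈ {x : ℝ | (1:ℝ)/2 ≤ cdf (mix ε F G) x}, A ≤ x := by
    intro x hx
    by_contra hxA
    push_neg at hxA
    have hlt : cdf F x < 1 - 1 / (2 * (1 - ε)) := by
      rcases lt_or_eq_of_le (monotone_cdf F hxA.le) with h | h
      · rw [hA] at h; exact h
      · exact absurd (hAu x (h.trans hA)) (ne_of_lt hxA)
    simp only [Set.mem_setOf_eq, hcdf] at hx
    have h2 : (1 - ε) * (1 / (2 * (1 - ε))) = 1/2 := by field_simp
    nlinarith [cdf_le_one G x]
  simp only [med, quant]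
  constructor
  · exact le_csInf ⟨B, hBmem⟩ hlow
  · exact csInf_le ⟨A, hlow⟩ hBmem
end

section
/- Let X be a real random variable with distribution F, 0 < ε < 1/2, q(ε) = 1/(2(1-ε)), and suppose A = F^{-1}(1 - q(ε)) and B = F^{-1}(q(ε)) exist uniquely. Then for any point x ∈ ℝ, the median of the point-mass contaminated distribution satisfies Med(F(ε, δ_x)) = Med{A, B, x}, the middle value of the three numbers A, B, x. -/
open MeasureTheory ProbabilityTheory
open scoped ENNReal

/-- The middle value of three real numbers. -/
noncomputable def mid3 (a b c : ℝ) : ℝ := a + b + c - max a (max b c) - min a (min b c)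

/-- Lemma 3.1 (L-ii): `Med(F(ε, δ_x)) = Med{A, B, x}`. -/
theorem stmt5 (F : Measure ℝ) [IsProbabilityMeasure F]
    (ε : ℝ) (hε1 : 0 < ε) (hε2 : ε < 1 / 2)
    (A B : ℝ)
    (hA : cdf F A = 1 - 1 / (2 * (1 - ε)))
    (hAu : ∀ t : ℝ, cdf F t = 1 - 1 / (2 * (1 - ε)) → t = A)
    (hB : cdf F B = 1 / (2 * (1 - ε)))
    (hBu : ∀ t : ℝ, cdf F t = 1 / (2 * (1 - ε)) → t = B)
    (x : ℝ) :
    med (mix ε F (Measure.dirac x)) = mid3 A B x := by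
  have hε3 : (0:ℝ) < 1 - ε := by linarith
  set q : ℝ := 1 / (2 * (1 - ε)) with hq
  have hmul : (1 - ε) * q = 1/2 := by
    rw [hq]; field_simp
  have hq1 : (1:ℝ)/2 < q := by
    rw [hq]; rw [div_lt_div_iff₀ (by norm_num) (by linarith)]; linarith
  have hmixprob : IsProbabilityMeasure (mix ε F (Measure.dirac x)) := by
    constructor
    simp only [mix, Measure.add_apply, Measure.smul_apply, smul_eq_mul, measure_univ, mul_one]
    rw [← ENNReal.ofReal_add (by linarith) hε1.le]
    norm_num
  -- cdf of the mixture
  have hG : ∀ t, cdf (mix ε F (Measure.dirac x)) t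
      = (1-ε) * cdf F t + ε * (if x ≤ t then 1 else 0) := by
    intro t
    rw [cdf_eq_real, cdf_eq_real, Measure.real, Measure.real]
    simp only [mix, Measure.add_apply, Measure.smul_apply, smul_eq_mul,
      Measure.dirac_apply' _ measurableSet_Iic]
    rw [ENNReal.toReal_add, ENNReal.toReal_mul, ENNReal.toReal_mul,
      ENNReal.toReal_ofReal hε3.le, ENNReal.toReal_ofReal hε1.le]
    · congr 1
      by_cases hxt : x ≤ t
      · simp [Set.indicator, hxt]
      · simp [Set.indicator, hxt]
    · exact ENNReal.mul_ne_top ENNReal.ofReal_ne_top (measure_ne_top F _)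
    · exact ENNReal.mul_ne_top ENNReal.ofReal_ne_top (by
        by_cases hxt : x ≤ t <;> simp [Set.indicator, hxt])
  -- key median characterization
  have key : ∀ m : ℝ, 1/2 ≤ cdf (mix ε F (Measure.dirac x)) m →
      (∀ t, t < m → cdf (mix ε F (Measure.dirac x)) t < 1/2) →
      med (mix ε F (Measure.dirac x)) = m := by
    intro m hm hlt
    have : IsLeast {t : ℝ | 1/2 ≤ cdf (mix ε F (Measure.dirac x)) t} m := by
      constructor
      · exact hm
      · intro t ht
        by_contra h
        exact absurd ht (not_le.mpr (hlt t (not_le.mp h)))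
    exact this.csInf_eq
  -- monotonicity and strict facts
  have hmono : Monotone (cdf F) := (cdf F).mono
  have hltA : ∀ t, t < A → cdf F t < 1 - q := by
    intro t ht
    rcases lt_or_eq_of_le (hmono ht.le) with h | h
    · rw [hA] at h; exact h
    · exact absurd (hAu t (by rw [h, hA])) (ne_of_lt ht)
  have hltB : ∀ t, t < B → cdf F t < q := by
    intro t ht
    rcases lt_or_eq_of_le (hmono ht.le) with h | h
    · rw [hB] at h; exact h
    · exact absurd (hBu t (by rw [h, hB])) (ne_of_lt ht)
  have hAB : A < B := by
    by_contra h
    push_neg at h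
    have := hmono h
    rw [hA, hB] at this
    linarith
  rcases le_total x A with hxA | hAx
  · -- x ≤ A, median is A
    have hmid : mid3 A B x = A := by
      have h1 : max B x = B := max_eq_left (by linarith)
      have h2 : min B x = x := min_eq_right (by linarith)
      have h3 : max A B = B := max_eq_right hAB.le
      have h4 : min A x = x := min_eq_right hxA
      simp only [mid3, h1, h2, h3, h4]
      ring
    rw [hmid]
    apply key
    · rw [hG, if_pos hxA, hA]
      nlinarith
    · intro t ht
      rw [hG]
      have := hltA t ht
      by_cases hxt : x ≤ t
      · rw [if_pos hxt]; nlinarith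
      · rw [if_neg hxt]; nlinarith
  · rcases le_total x B with hxB | hBx
    · -- A ≤ x ≤ B, median is x
      have hmid : mid3 A B x = x := by
        have h1 : max B x = B := max_eq_left hxB
        have h2 : min B x = x := min_eq_right hxB
        have h3 : max A B = B := max_eq_right hAB.le
        have h4 : min A x = A := min_eq_left hAx
        simp only [mid3, h1, h2, h3, h4]
        ring
      rw [hmid]
      apply key
      · rw [hG, if_pos le_rfl]
        have h5 : 1 - q ≤ cdf F x := by rw [← hA]; exact hmono hAx
        nlinarith
      · intro t ht
        rw [hG, if_neg (not_le.mpr ht)]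
        have := hltB t (lt_of_lt_of_le ht hxB)
        nlinarith
    · -- B ≤ x, median is B
      have hmid : mid3 A B x = B := by
        have h1 : max B x = x := max_eq_right hBx
        have h2 : min B x = B := min_eq_left hBx
        have h3 : max A x = x := max_eq_right (by linarith)
        have h4 : min A B = A := min_eq_left hAB.le
        simp only [mid3, h1, h2, h3, h4]
        ring
      rw [hmid]
      apply key
      · rw [hG, hB]
        by_cases hxt : x ≤ B
        · rw [if_pos hxt]; nlinarith
        · rw [if_neg hxt]; nlinarith
      · intro t ht
        rw [hG, if_neg (not_le.mpr (lt_of_lt_of_le ht hBx))]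
        have := hltB t ht
        nlinarith
end

section
/- Let X have distribution F, 0 < ε < 1/2, q(ε) = 1/(2(1-ε)). Define m₁(X, c, ε) = F_{|X−c|}^{-1}(1 − q(ε)) and m₂(X, c, ε) = F_{|X−c|}^{-1}(q(ε)). Then for any distribution G on ℝ, m₁(X, Med(F(ε,G)), ε) ≤ MAD(F(ε, G)) ≤ m₂(X, Med(F(ε,G)), ε), where MAD(H) = Med(|Z − Med(H)|) for Z ∼ H. -/
open MeasureTheory ProbabilityTheory
open scoped ENNReal

/-- The median absolute deviation: `MAD(H) = Med(|Z − Med(H)|)` for `Z ∼ H`. -/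
noncomputable def mad (μ : Measure ℝ) : ℝ := med (μ.map fun t => |t - med μ|)

lemma bddBelow_cdf_set (μ : Measure ℝ) {p : ℝ} (hp : 0 < p) :
    BddBelow {x : ℝ | p ≤ cdf μ x} := by
  obtain ⟨x₀, hx₀⟩ := ((tendsto_cdf_atBot μ).eventually (eventually_lt_nhds hp)).exists
  refine ⟨x₀, fun x hx => ?_⟩
  by_contra h
  push_neg at h
  exact absurd (le_trans hx ((cdf μ).mono h.le)) (not_le.mpr hx₀)

lemma nonempty_cdf_set (μ : Measure ℝ) [IsProbabilityMeasure μ] {p : ℝ} (hp : p < 1) :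
    {x : ℝ | p ≤ cdf μ x}.Nonempty := by
  obtain ⟨x₀, hx₀⟩ := ((tendsto_cdf_atTop μ).eventually (eventually_gt_nhds hp)).exists
  exact ⟨x₀, hx₀.le⟩

/-- Lemma 3.1 (L-iii):
`m₁(X, Med(F(ε,G)), ε) ≤ MAD(F(ε,G)) ≤ m₂(X, Med(F(ε,G)), ε)`,
where `mᵢ(X, c, ε)` are the quantiles of the distribution of `|X − c|` at levels
`1 − q(ε)` and `q(ε)` with `q(ε) = 1/(2(1−ε))`. -/
theorem stmt6 (F G : Measure ℝ) [IsProbabilityMeasure F] [IsProbabilityMeasure G]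
    (ε : ℝ) (hε1 : 0 < ε) (hε2 : ε < 1 / 2) :
    quant (F.map fun t => |t - med (mix ε F G)|) (1 - 1 / (2 * (1 - ε)))
        ≤ mad (mix ε F G) ∧
      mad (mix ε F G) ≤ quant (F.map fun t => |t - med (mix ε F G)|) (1 / (2 * (1 - ε))) := by
  have h1ε : (0:ℝ) < 1 - ε := by linarith
  have h2ε : (0:ℝ) < 2 * (1 - ε) := by linarith
  set c := med (mix ε F G) with hc
  have hf : Measurable fun t : ℝ => |t - c| := (measurable_id.sub_const c).abs
  set F' := F.map (fun t : ℝ => |t - c|) with hF'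
  set G' := G.map (fun t : ℝ => |t - c|) with hG'
  haveI : IsProbabilityMeasure F' := Measure.isProbabilityMeasure_map hf.aemeasurable
  haveI : IsProbabilityMeasure G' := Measure.isProbabilityMeasure_map hf.aemeasurable
  have hmap : (mix ε F G).map (fun t : ℝ => |t - c|)
      = ENNReal.ofReal (1 - ε) • F' + ENNReal.ofReal ε • G' := by
    rw [mix, Measure.map_add _ _ hf, Measure.map_smul, Measure.map_smul]
  set ν := (mix ε F G).map (fun t : ℝ => |t - c|) with hν
  haveI : IsProbabilityMeasure ν := by
    constructor
    rw [hmap]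
    simp only [Measure.add_apply, Measure.smul_apply, smul_eq_mul, measure_univ, mul_one]
    rw [← ENNReal.ofReal_add (by linarith) (by linarith)]
    norm_num
  have hcdf : ∀ x, cdf ν x = (1 - ε) * cdf F' x + ε * cdf G' x := by
    intro x
    rw [cdf_eq_real, cdf_eq_real, cdf_eq_real, hmap]
    simp only [measureReal_def]
    simp only [Measure.add_apply, Measure.smul_apply, smul_eq_mul]
    rw [ENNReal.toReal_add (by finiteness) (by finiteness), ENNReal.toReal_mul,
      ENNReal.toReal_mul, ENNReal.toReal_ofReal h1ε.le, ENNReal.toReal_ofReal hε1.le]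
  have key : (2 * (1 - ε)) * (1 / (2 * (1 - ε))) = 1 := by
    field_simp
  have hq1 : 1 / (2 * (1 - ε)) < 1 := by
    rw [div_lt_one h2ε]; linarith
  have hq0 : 0 < 1 / (2 * (1 - ε)) := by positivity
  have hmad : mad (mix ε F G) = sInf {x : ℝ | 1 / 2 ≤ cdf ν x} := by
    rw [mad, med, quant]
  constructor
  · -- lower bound
    rw [hmad, quant]
    apply csInf_le_csInf (bddBelow_cdf_set F' (by nlinarith)) (nonempty_cdf_set ν (by norm_num))
    intro x hx
    simp only [Set.mem_setOf_eq] at hx ⊢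
    rw [hcdf] at hx
    have hb := cdf_le_one G' x
    nlinarith [hx, hb]
  · -- upper bound
    rw [hmad, quant]
    apply csInf_le_csInf (bddBelow_cdf_set ν (by norm_num)) (nonempty_cdf_set F' hq1)
    intro x hx
    simp only [Set.mem_setOf_eq] at hx ⊢
    rw [hcdf]
    have hb := cdf_nonneg G' x
    nlinarith [hx, hb]
end

section
/- Let y be a symmetric real random variable with distribution F_y and unique quantiles. Then MAD(F_y(ε, δ_{y₀})) → F_y^{-1}(3/4) as ε → 0⁺, for any fixed y₀ ∈ ℝ, where F_y(ε, δ_{y₀}) = (1−ε)F_y + ε δ_{y₀}. -/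
open MeasureTheory ProbabilityTheory Filter
open scoped ENNReal Topology

lemma quant_mem {μ : Measure ℝ} {p a b : ℝ} (ha : cdf μ a < p) (hb : p ≤ cdf μ b) :
    quant μ p ∈ Set.Icc a b := by
  have hlb : ∀ x ∈ {x : ℝ | p ≤ cdf μ x}, a ≤ x := by
    intro x hx
    by_contra h
    exact absurd (le_trans hx (monotone_cdf μ (le_of_not_ge h))) (not_le.2 ha)
  exact ⟨le_csInf ⟨b, hb⟩ hlb, csInf_le ⟨a, hlb⟩ hb⟩

lemma quant_eq {μ : Measure ℝ} {p t : ℝ} (ht : cdf μ t = p)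
    (hu : ∀ s : ℝ, cdf μ s = p → s = t) : quant μ p = t := by
  have hlb : ∀ x ∈ {x : ℝ | p ≤ cdf μ x}, t ≤ x := by
    intro x hx
    by_contra h
    push_neg at h
    have h1 : cdf μ x ≤ p := ht ▸ monotone_cdf μ h.le
    have h2 : cdf μ x = p := le_antisymm h1 hx
    exact absurd (hu x h2) h.ne
  exact le_antisymm (csInf_le ⟨t, hlb⟩ (le_of_eq ht.symm)) (le_csInf ⟨t, le_of_eq ht.symm⟩ hlb)

lemma mix_isProb {α : Type*} [MeasurableSpace α] (μ ν : Measure α) [IsProbabilityMeasure μ]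
    [IsProbabilityMeasure ν] {ε : ℝ} (hε0 : 0 ≤ ε) (hε1 : ε ≤ 1) :
    IsProbabilityMeasure (mix ε μ ν) := by
  constructor
  simp only [mix, Measure.add_apply, Measure.smul_apply, smul_eq_mul, measure_univ, mul_one]
  rw [← ENNReal.ofReal_add (by linarith) hε0]
  norm_num

lemma cdf_mix_dirac (μ : Measure ℝ) [IsProbabilityMeasure μ] {ε : ℝ} (hε0 : 0 < ε)
    (hε1 : ε < 1) (a x : ℝ) :
    cdf (mix ε μ (Measure.dirac a)) x
      = (1 - ε) * cdf μ x + (if a ≤ x then ε else 0) := by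
  haveI := mix_isProb μ (Measure.dirac a) hε0.le hε1.le
  rw [cdf_eq_real, measureReal_def]
  simp only [mix, Measure.add_apply, Measure.smul_apply, smul_eq_mul,
    Measure.dirac_apply' a measurableSet_Iic]
  rw [ENNReal.toReal_add (by finiteness) (by
      refine ENNReal.mul_ne_top ENNReal.ofReal_ne_top ?_
      by_cases h : a ∈ Set.Iic x <;> simp [h]), ENNReal.toReal_mul,
    ENNReal.toReal_mul, ENNReal.toReal_ofReal (by linarith), ENNReal.toReal_ofReal hε0.le,
    cdf_eq_real, measureReal_def]
  congr 1
  by_cases h : a ∈ Set.Iic x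
  · simp [Set.indicator_of_mem h, h, Set.mem_Iic.mp h]
  · simp only [Set.indicator_of_notMem h]
    rw [if_neg (Set.mem_Iic.not.mp h ∘ Set.mem_Iic.mpr)]
    simp

/-- `MAD(F_y(ε, δ_{y₀})) → F_y⁻¹(3/4)` as `ε → 0⁺`, for `y` symmetric
with unique quantiles. -/
theorem stmt12 (F : Measure ℝ) [IsProbabilityMeasure F]
    -- y symmetric about 0
    (hsymm : F.map (fun t => -t) = F)
    -- quantiles of F_y exist uniquely
    (huniq : ∀ q ∈ Set.Ioo (0 : ℝ) 1, ∃! t : ℝ, cdf F t = q)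
    -- quantiles of F_{|y−c|} exist uniquely
    (huniq2 : ∀ c : ℝ, ∀ q ∈ Set.Ioo (0 : ℝ) 1,
      ∃! t : ℝ, cdf (F.map fun s => |s - c|) t = q)
    (y₀ : ℝ) :
    Tendsto (fun ε : ℝ => mad (mix ε F (Measure.dirac y₀)))
      (𝓝[>] 0) (𝓝 (quant F (3 / 4))) := by
  -- left limits of the cdf coincide with values (continuity)
  have hL : ∀ a : ℝ, Function.leftLim (cdf F) a = cdf F a := by
    intro a
    have h1 : Function.leftLim (cdf F) a ≤ cdf F a := (monotone_cdf F).leftLim_le le_rfl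
    rcases eq_or_lt_of_le h1 with h | h
    · exact h
    · exfalso
      set L := Function.leftLim (cdf F) a with hLdef
      have hL0 : 0 ≤ L := le_trans (cdf_nonneg F (a - 1)) ((monotone_cdf F).le_leftLim (sub_one_lt a))
      have hfa1 : cdf F a ≤ 1 := cdf_le_one F a
      set q := (L + cdf F a) / 2 with hq
      have hq1 : L < q := by rw [hq]; linarith
      have hq2 : q < cdf F a := by rw [hq]; linarith
      obtain ⟨s, hs, -⟩ := huniq q ⟨by linarith, by linarith⟩
      have hsa : s < a := by
        by_contra hc
        exact absurd (hs ▸ monotone_cdf F (le_of_not_gt hc)) (not_le.2 hq2)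
      exact absurd (hs ▸ (monotone_cdf F).le_leftLim hsa) (not_le.2 hq1)
  have hconta : ∀ a : ℝ, ContinuousAt (cdf F) a := fun a =>
    (monotone_cdf F).continuousAt_iff_leftLim_eq_rightLim.2
      (by rw [hL a, (cdf F).rightLim_eq])
  -- strict monotonicity where values lie in (0,1)
  have hlt : ∀ s τ : ℝ, s < τ →
      cdf F s ∈ Set.Ioo (0:ℝ) 1 ∨ cdf F τ ∈ Set.Ioo (0:ℝ) 1 → cdf F s < cdf F τ := by
    intro s τ hst hmem
    refine lt_of_le_of_ne (monotone_cdf F hst.le) fun heq => hst.ne ?_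
    rcases hmem with hm | hm
    · exact (huniq _ hm).unique rfl heq.symm
    · exact (huniq _ hm).unique heq rfl
  -- Icc formula
  have hIcc : ∀ a b : ℝ, F (Set.Icc a b) = ENNReal.ofReal (cdf F b - cdf F a) := by
    intro a b
    conv_lhs => rw [← measure_cdf F]
    rw [StieltjesFunction.measure_Icc, hL a]
  -- symmetry of the cdf
  have hsym : ∀ x : ℝ, cdf F (-x) = 1 - cdf F x := by
    intro x
    have key : F (Set.Iic (-x)) = F (Set.Ici x) := by
      conv_lhs => rw [← hsymm]
      rw [Measure.map_apply measurable_neg measurableSet_Iic]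
      congr 1
      ext t
      simp
    have h1 : F (Set.Iic (-x)) = ENNReal.ofReal (cdf F (-x)) := (ofReal_cdf F (-x)).symm
    have h2 : F (Set.Ici x) = ENNReal.ofReal (1 - cdf F x) := by
      conv_lhs => rw [← measure_cdf F]
      rw [StieltjesFunction.measure_Ici _ (tendsto_cdf_atTop F), hL x]
    rw [h1, h2] at key
    exact (ENNReal.ofReal_eq_ofReal_iff (cdf_nonneg F _) (by linarith [cdf_le_one F x])).1 key
  have hhalf : cdf F 0 = 1 / 2 := by have := hsym 0; rw [neg_zero] at this; linarith
  -- cdf of the mapped measure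
  have hg : ∀ m : ℝ, Measurable fun s : ℝ => |s - m| := fun m =>
    ((continuous_id.sub continuous_const).abs).measurable
  have hmap : ∀ m x : ℝ, 0 ≤ x →
      cdf (F.map fun s => |s - m|) x = cdf F (m + x) - cdf F (m - x) := by
    intro m x hx
    haveI := Measure.isProbabilityMeasure_map (μ := F) (hg m).aemeasurable
    rw [cdf_eq_real, measureReal_def, Measure.map_apply (hg m) measurableSet_Iic]
    have hpre : (fun s : ℝ => |s - m|) ⁻¹' Set.Iic x = Set.Icc (m - x) (m + x) := by
      ext s
      simp only [Set.mem_preimage, Set.mem_Iic, Set.mem_Icc, abs_le]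
      constructor <;> intro ⟨h1, h2⟩ <;> constructor <;> linarith
    rw [hpre, hIcc, ENNReal.toReal_ofReal (sub_nonneg.2 (monotone_cdf F (by linarith)))]
  -- the 3/4-quantile
  obtain ⟨t, ht, htu⟩ := huniq (3/4) ⟨by norm_num, by norm_num⟩
  have hqt : quant F (3/4) = t := quant_eq ht fun s hs => htu s hs
  have ht0 : 0 < t := by
    by_contra hc
    have := monotone_cdf F (le_of_not_gt hc)
    rw [ht, hhalf] at this
    linarith
  -- the median of the contaminated measure tends to 0
  have hmed : Tendsto (fun ε : ℝ => med (mix ε F (Measure.dirac y₀))) (𝓝[>] 0) (𝓝 0) := by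
    rw [Metric.tendsto_nhds]
    intro η hη
    set b := η / 2 with hb
    have hb0 : 0 < b := by positivity
    have h1 : 1/2 < cdf F b := by
      have := hlt 0 b hb0 (Or.inl (by rw [hhalf]; constructor <;> norm_num))
      rwa [hhalf] at this
    have h2 : cdf F (-b) < 1/2 := by
      have := hlt (-b) 0 (by linarith) (Or.inr (by rw [hhalf]; constructor <;> norm_num))
      rwa [hhalf] at this
    set δ := min 1 (min (cdf F b - 1/2) (1/2 - cdf F (-b))) with hδ
    have hδ0 : 0 < δ := by
      apply lt_min one_pos
      apply lt_min <;> linarith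
    filter_upwards [Ioo_mem_nhdsGT_of_mem (Set.mem_Ico.2 ⟨le_refl (0:ℝ), hδ0⟩)] with ε hε
    obtain ⟨hε0, hεδ⟩ := hε
    have hε1 : ε < 1 := lt_of_lt_of_le hεδ (min_le_left _ _)
    have hεb : ε ≤ cdf F b - 1/2 :=
      le_trans hεδ.le (le_trans (min_le_right _ _) (min_le_left _ _))
    have hεb' : ε < 1/2 - cdf F (-b) :=
      lt_of_lt_of_le hεδ (le_trans (min_le_right _ _) (min_le_right _ _))
    haveI := mix_isProb F (Measure.dirac y₀) hε0.le hε1.le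
    have hub : 1/2 ≤ cdf (mix ε F (Measure.dirac y₀)) b := by
      rw [cdf_mix_dirac F hε0 hε1]
      have hite : (0:ℝ) ≤ if y₀ ≤ b then ε else 0 := by positivity
      nlinarith [cdf_le_one F b, cdf_nonneg F b]
    have hlb2 : cdf (mix ε F (Measure.dirac y₀)) (-b) < 1/2 := by
      rw [cdf_mix_dirac F hε0 hε1]
      have hite : (if y₀ ≤ -b then ε else 0) ≤ ε := by
        split_ifs
        · exact le_refl ε
        · exact hε0.le
      nlinarith [cdf_nonneg F (-b), mul_nonneg hε0.le (cdf_nonneg F (-b))]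
    have hmem : med (mix ε F (Measure.dirac y₀)) ∈ Set.Icc (-b) b := quant_mem hlb2 hub
    rw [Real.dist_eq, sub_zero, abs_lt]
    constructor
    · linarith [hmem.1]
    · linarith [hmem.2]
  -- main convergence
  rw [Metric.tendsto_nhds]
  intro ρ hρ
  set η := min (ρ/2) (t/2) with hηdef
  have hη0 : 0 < η := lt_min (by positivity) (by positivity)
  have hηρ : η < ρ := lt_of_le_of_lt (min_le_left _ _) (by linarith)
  have hηt : η < t := lt_of_le_of_lt (min_le_right _ _) (by linarith)
  set c₁ := t + η with hc₁
  set c₂ := t - η with hc₂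
  have hc₂0 : 0 < c₂ := by rw [hc₂]; linarith
  have hfc₁ : 3/4 < cdf F c₁ := by
    have := hlt t c₁ (by rw [hc₁]; linarith) (Or.inl (by rw [ht]; constructor <;> norm_num))
    rwa [ht] at this
  have hfc₂ : cdf F c₂ < 3/4 := by
    have := hlt c₂ t (by rw [hc₂]; linarith) (Or.inr (by rw [ht]; constructor <;> norm_num))
    rwa [ht] at this
  have hfc₁1 : cdf F c₁ ≤ 1 := cdf_le_one F c₁
  have hfc₂0 : 0 ≤ cdf F c₂ := cdf_nonneg F c₂
  set m : ℝ → ℝ := fun ε => med (mix ε F (Measure.dirac y₀)) with hmdef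
  set l : Filter ℝ := 𝓝[>] (0:ℝ) with hl
  have hid : Tendsto (fun ε : ℝ => ε) l (𝓝 0) := tendsto_id.mono_left nhdsWithin_le_nhds
  have hone : Tendsto (fun ε : ℝ => 1 - ε) l (𝓝 1) := by
    simpa using tendsto_const_nhds.sub hid
  have hcomp : ∀ c : ℝ, Tendsto (fun ε => cdf F (m ε + c) - cdf F (m ε - c)) l
      (𝓝 (cdf F c - cdf F (-c))) := by
    intro c
    have h1 : Tendsto (fun ε => m ε + c) l (𝓝 c) := by simpa using hmed.add_const c
    have h2 : Tendsto (fun ε => m ε - c) l (𝓝 (-c)) := by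
      simpa [zero_sub] using hmed.sub_const c
    exact ((hconta c).tendsto.comp h1).sub (((hconta (-c)).tendsto.comp h2))
  have hu : Tendsto (fun ε => (1 - ε) * (cdf F (m ε + c₁) - cdf F (m ε - c₁))) l
      (𝓝 (2 * cdf F c₁ - 1)) := by
    have := hone.mul (hcomp c₁)
    rw [one_mul, hsym c₁] at this
    convert this using 2
    ring
  have hv : Tendsto (fun ε => (1 - ε) * (cdf F (m ε + c₂) - cdf F (m ε - c₂)) + ε) l
      (𝓝 (2 * cdf F c₂ - 1)) := by
    have := (hone.mul (hcomp c₂)).add hid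
    rw [one_mul, hsym c₂] at this
    convert this using 2
    ring
  have E1 : ∀ᶠ ε in l, 1/2 < (1 - ε) * (cdf F (m ε + c₁) - cdf F (m ε - c₁)) :=
    hu.eventually (lt_mem_nhds (by linarith))
  have E2 : ∀ᶠ ε in l, (1 - ε) * (cdf F (m ε + c₂) - cdf F (m ε - c₂)) + ε < 1/2 :=
    hv.eventually (gt_mem_nhds (by linarith))
  have E3 : Set.Ioo (0:ℝ) 1 ∈ l := Ioo_mem_nhdsGT_of_mem (Set.mem_Ico.2 ⟨le_refl _, one_pos⟩)
  filter_upwards [E1, E2, E3] with ε h1 h2 h3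
  obtain ⟨hε0, hε1⟩ := h3
  haveI := mix_isProb F (Measure.dirac y₀) hε0.le hε1.le
  haveI := Measure.isProbabilityMeasure_map (μ := F) (hg (m ε)).aemeasurable
  have hmapeq : (mix ε F (Measure.dirac y₀)).map (fun s => |s - m ε|)
      = mix ε (F.map fun s => |s - m ε|) (Measure.dirac |y₀ - m ε|) := by
    simp only [mix]
    rw [Measure.map_add _ _ (hg (m ε)), Measure.map_smul, Measure.map_smul,
      Measure.map_dirac' (hg (m ε))]
  have hmad : mad (mix ε F (Measure.dirac y₀))
      = med (mix ε (F.map fun s => |s - m ε|) (Measure.dirac |y₀ - m ε|)) := by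
    rw [mad, ← hmapeq]
  have hcm : ∀ x : ℝ, cdf (mix ε (F.map fun s => |s - m ε|) (Measure.dirac |y₀ - m ε|)) x
      = (1 - ε) * cdf (F.map fun s => |s - m ε|) x + (if |y₀ - m ε| ≤ x then ε else 0) :=
    cdf_mix_dirac _ hε0 hε1 _
  have hub : 1/2 ≤ cdf (mix ε (F.map fun s => |s - m ε|) (Measure.dirac |y₀ - m ε|)) c₁ := by
    rw [hcm, hmap (m ε) c₁ (by linarith)]
    have hite : (0:ℝ) ≤ if |y₀ - m ε| ≤ c₁ then ε else 0 := by positivity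
    linarith [h1]
  have hlb : cdf (mix ε (F.map fun s => |s - m ε|) (Measure.dirac |y₀ - m ε|)) c₂ < 1/2 := by
    rw [hcm, hmap (m ε) c₂ hc₂0.le]
    have hite : (if |y₀ - m ε| ≤ c₂ then ε else 0) ≤ ε := by
      split_ifs
      · exact le_refl ε
      · exact hε0.le
    linarith [h2]
  have hmem : med (mix ε (F.map fun s => |s - m ε|) (Measure.dirac |y₀ - m ε|))
      ∈ Set.Icc c₂ c₁ := quant_mem hlb hub
  rw [Real.dist_eq, hqt, hmad, abs_lt]
  constructor
  · linarith [hmem.1]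
  · linarith [hmem.2]
end
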